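/- arXiv:2105.09631 — 4 statements merged into one kernel-verified Lean document; each statement's English description precedes it below -/
import Mathlib

section
/- Let P ∈ ℚ⟨x,y⟩[[T,A,B]] be of the form S·v with S a central parameter and v ∈ {x,y}. Then for any w₀,…,w_m ∈ 𝔥[[T,A,B]] and letters u₁,…,u_m ∈ {x,y}, we have (1-P)^{-1} ⧢ (w₀u₁w₁⋯u_mw_m) = ((1-P)^{-1}⧢w₀) u₁ ((1-P)^{-1}⧢w₁) ⋯ u_m ((1-P)^{-1}⧢w_m). -/
open scoped BigOperators

abbrev Ltr := Fin 2

/-- `𝔥 = ℚ⟨x,y⟩`, realized as the monoid algebra of the free monoid on two letters. -/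
abbrev H := MonoidAlgebra ℚ (FreeMonoid Ltr)

/-- The word `u₁⋯u_m` as an element of `𝔥`. -/
noncomputable def wrd (l : List Ltr) : H := MonoidAlgebra.of ℚ (FreeMonoid Ltr) (FreeMonoid.ofList l)

/-- The generator `x`. -/
noncomputable def Xh : H := wrd [0]
/-- The generator `y`. -/
noncomputable def Yh : H := wrd [1]

/-- The shuffle product on words: `w⧢1 = 1⧢w = w`,
`u₁w₁ ⧢ u₂w₂ = u₁(w₁ ⧢ u₂w₂) + u₂(u₁w₁ ⧢ w₂)`. -/
noncomputable def shW : List Ltr → List Ltr → H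
  | [], v => wrd v
  | u, [] => wrd u
  | a :: u, b :: v => wrd [a] * shW u (b :: v) + wrd [b] * shW (a :: u) v
termination_by u v => u.length + v.length

/-- The shuffle product `⧢` on `𝔥`, extended bilinearly. -/
noncomputable def shuf (f g : H) : H :=
  f.coeff.sum fun u cu => g.coeff.sum fun v cv => (cu * cv) • shW u.toList v.toList

/-- `𝔥[[T,A,B]]`. -/
abbrev PS3 := MvPowerSeries (Fin 3) H

/-- The shuffle product extended bilinearly and coefficientwise to `𝔥[[T,A,B]]`
(the central parameters multiply as usual). -/
noncomputable def shuf3 (f g : PS3) : PS3 := fun n =>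
  ∑ p ∈ Finset.HasAntidiagonal.antidiagonal n,
    shuf (MvPowerSeries.coeff p.1 f) (MvPowerSeries.coeff p.2 g)

/-- The element `S · v` of `𝔥[[T,A,B]]`, where `S` is the `i`-th parameter
(among `T,A,B`) and `v ∈ {x,y}`. -/
noncomputable def Pelt (i : Fin 3) (u : Ltr) : PS3 :=
  MvPowerSeries.X i * MvPowerSeries.C (wrd [u])

/-- The element `w₀u₁w₁⋯u_mw_m` of `𝔥[[T,A,B]]`, given `w₀` and the list
`[(u₁,w₁),…,(u_m,w_m)]`. -/
noncomputable def chain (w₀ : PS3) (l : List (Ltr × PS3)) : PS3 :=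
  w₀ * (l.map fun p => MvPowerSeries.C (wrd [p.1]) * p.2).prod


-- ===== auxiliary lemmas =====

lemma shW_nil_left (w : List Ltr) : shW [] w = wrd w := by cases w <;> simp [shW]
lemma shW_nil_right (w : List Ltr) : shW w [] = wrd w := by cases w <;> simp [shW]
lemma shW_cons (a b : Ltr) (u v : List Ltr) :
    shW (a :: u) (b :: v) = wrd [a] * shW u (b :: v) + wrd [b] * shW (a :: u) v := by rw [shW]
lemma wrd_mul (a b : List Ltr) : wrd a * wrd b = wrd (a ++ b) := by
  unfold wrd; rw [← map_mul]; rfl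
lemma wrd_nil : wrd [] = 1 := by unfold wrd; exact map_one _

lemma shuf_zero_left (g : H) : shuf 0 g = 0 := by simp [shuf]
lemma shuf_zero_right (f : H) : shuf f 0 = 0 := by simp [shuf]
lemma shuf_add_right (f g g' : H) : shuf f (g + g') = shuf f g + shuf f g' := by
  unfold shuf
  rw [← Finsupp.sum_add]
  refine Finsupp.sum_congr fun u _ => ?_
  rw [MonoidAlgebra.coeff_add, Finsupp.sum_add_index' (fun v => by simp) (fun v b₁ b₂ => ?_)]
  rw [mul_add, add_smul]
lemma shuf_smul_right (c : ℚ) (f g : H) : shuf f (c • g) = c • shuf f g := by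
  unfold shuf
  rw [Finsupp.smul_sum]
  refine Finsupp.sum_congr fun u cu => ?_
  rw [MonoidAlgebra.coeff_smul, Finsupp.sum_smul_index' (fun v => by simp), Finsupp.smul_sum]
  refine Finsupp.sum_congr fun v _ => ?_
  rw [smul_eq_mul, mul_left_comm, mul_smul]
lemma shuf_sum_right {α : Type*} (s : Finset α) (f : H) (g : α → H) :
    shuf f (∑ x ∈ s, g x) = ∑ x ∈ s, shuf f (g x) := by
  classical
  induction s using Finset.induction with
  | empty => simp [shuf_zero_right]
  | insert a s hx ih => rw [Finset.sum_insert hx, Finset.sum_insert hx, shuf_add_right, ih]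

lemma wrd_def (l : List Ltr) : wrd l = MonoidAlgebra.single (FreeMonoid.ofList l) 1 := rfl

lemma shuf_wrd (a b : List Ltr) : shuf (wrd a) (wrd b) = shW a b := by
  rw [shuf, wrd_def, wrd_def, MonoidAlgebra.coeff_single, MonoidAlgebra.coeff_single, Finsupp.sum_single_index, Finsupp.sum_single_index]
  all_goals simp

lemma single_eq_smul_wrd (x : FreeMonoid Ltr) (q : ℚ) :
    MonoidAlgebra.single x q = q • wrd x.toList := by
  rw [wrd_def, MonoidAlgebra.smul_single, smul_eq_mul, mul_one, FreeMonoid.ofList_toList]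

lemma keyW (v c : Ltr) (B : List Ltr) :
    ∀ (A : List Ltr) (n : ℕ),
      shW (List.replicate n v) (A ++ c :: B) =
      ∑ k ∈ Finset.range (n + 1),
        shW (List.replicate k v) A * wrd [c] * shW (List.replicate (n - k) v) B := by
  intro A
  induction A with
  | nil =>
    intro n
    induction n with
    | zero => simp [shW_nil_left, shW_nil_right, wrd_nil, wrd_mul]
    | succ m ih =>
      have hR : ∑ k ∈ Finset.range (m + 1 + 1), shW (List.replicate k v) [] * wrd [c] * shW (List.replicate (m + 1 - k) v) B
          = (∑ j ∈ Finset.range (m + 1), wrd [v] * (shW (List.replicate j v) [] * wrd [c] * shW (List.replicate (m - j) v) B))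
            + wrd [c] * shW (List.replicate (m+1) v) B := by
        rw [Finset.sum_range_succ']
        congr 1
        · refine Finset.sum_congr rfl fun j _ => ?_
          rw [Nat.succ_sub_succ, List.replicate_succ, shW_nil_right, shW_nil_right,
            show (v :: List.replicate j v) = [v] ++ List.replicate j v from rfl, ← wrd_mul]
          noncomm_ring
        · simp only [List.replicate, shW_nil_left, wrd_nil, Nat.sub_zero, one_mul]
      rw [List.nil_append] at ih
      rw [List.nil_append, hR, List.replicate_succ, shW_cons, ih, Finset.mul_sum,
        ← List.replicate_succ]
  | cons a A' ihA =>
    intro n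
    induction n with
    | zero =>
      rw [Finset.sum_range_one]
      simp only [List.replicate, shW_nil_left, Nat.zero_sub]
      rw [wrd_mul, wrd_mul]
      simp
    | succ m ih =>
      have hR : ∑ k ∈ Finset.range (m + 1 + 1), shW (List.replicate k v) (a :: A') * wrd [c] * shW (List.replicate (m + 1 - k) v) B
          = (∑ j ∈ Finset.range (m + 1), wrd [v] * (shW (List.replicate j v) (a :: A') * wrd [c] * shW (List.replicate (m - j) v) B))
            + ∑ k ∈ Finset.range (m + 1 + 1), wrd [a] * (shW (List.replicate k v) A' * wrd [c] * shW (List.replicate (m + 1 - k) v) B) := by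
        rw [Finset.sum_range_succ' (f := fun k => shW (List.replicate k v) (a :: A') * wrd [c] * shW (List.replicate (m + 1 - k) v) B),
            Finset.sum_range_succ' (f := fun k => wrd [a] * (shW (List.replicate k v) A' * wrd [c] * shW (List.replicate (m + 1 - k) v) B))]
        have hsplit : ∀ j, shW (List.replicate (j+1) v) (a :: A') * wrd [c] * shW (List.replicate (m + 1 - (j+1)) v) B
            = wrd [v] * (shW (List.replicate j v) (a :: A') * wrd [c] * shW (List.replicate (m - j) v) B)
              + wrd [a] * (shW (List.replicate (j+1) v) A' * wrd [c] * shW (List.replicate (m + 1 - (j+1)) v) B) := by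
          intro j
          rw [Nat.succ_sub_succ, List.replicate_succ, shW_cons, ← List.replicate_succ]
          noncomm_ring
        rw [Finset.sum_congr rfl fun j _ => hsplit j, Finset.sum_add_distrib]
        have h0 : shW (List.replicate 0 v) (a :: A') * wrd [c] * shW (List.replicate (m + 1 - 0) v) B
            = wrd [a] * (shW (List.replicate 0 v) A' * wrd [c] * shW (List.replicate (m + 1 - 0) v) B) := by
          simp only [List.replicate, shW_nil_left]
          rw [show (a :: A') = [a] ++ A' from rfl, ← wrd_mul]
          noncomm_ring
        rw [h0]
        noncomm_ring
      rw [hR, List.replicate_succ, List.cons_append, shW_cons, ← List.cons_append,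
        ← List.replicate_succ, ih, ihA (m+1), Finset.mul_sum, Finset.mul_sum]

lemma keyH (v c : Ltr) (n : ℕ) (f g : H) :
    shuf (wrd (List.replicate n v)) (f * wrd [c] * g) =
    ∑ k ∈ Finset.range (n + 1),
      shuf (wrd (List.replicate k v)) f * wrd [c] * shuf (wrd (List.replicate (n - k) v)) g := by
  induction f using MonoidAlgebra.induction_linear generalizing g with
  | zero => simp [shuf_zero_right]
  | add f1 f2 ih1 ih2 =>
    rw [add_mul, add_mul, shuf_add_right, ih1 g, ih2 g, ← Finset.sum_add_distrib]
    exact Finset.sum_congr rfl fun k _ => by rw [shuf_add_right]; noncomm_ring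
  | single x q =>
    rw [single_eq_smul_wrd]
    induction g using MonoidAlgebra.induction_linear with
    | zero => simp [shuf_zero_right]
    | add g1 g2 ih1 ih2 =>
      rw [mul_add, shuf_add_right, ih1, ih2, ← Finset.sum_add_distrib]
      exact Finset.sum_congr rfl fun k _ => by rw [shuf_add_right]; noncomm_ring
    | single y r =>
      rw [single_eq_smul_wrd]
      simp only [smul_mul_assoc, mul_smul_comm, shuf_smul_right, smul_smul, ← Finset.smul_sum]
      rw [mul_comm r q]
      congr 1
      rw [wrd_mul, wrd_mul, shuf_wrd, show (x.toList ++ [c] ++ y.toList) = x.toList ++ c :: y.toList by simp,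
        keyW v c y.toList x.toList n]
      refine Finset.sum_congr rfl fun k _ => ?_
      rw [shuf_wrd, shuf_wrd]

lemma sum4 {M : Type*} [AddCommMonoid M] (n : Fin 3 →₀ ℕ)
    (F : (Fin 3 →₀ ℕ) → (Fin 3 →₀ ℕ) → (Fin 3 →₀ ℕ) → (Fin 3 →₀ ℕ) → M) :
    (∑ pm ∈ Finset.HasAntidiagonal.antidiagonal n, ∑ r ∈ Finset.HasAntidiagonal.antidiagonal pm.2, ∑ qq ∈ Finset.HasAntidiagonal.antidiagonal pm.1,
      F qq.1 r.1 qq.2 r.2)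
    = ∑ rs ∈ Finset.HasAntidiagonal.antidiagonal n, ∑ x ∈ Finset.HasAntidiagonal.antidiagonal rs.1, ∑ y ∈ Finset.HasAntidiagonal.antidiagonal rs.2,
      F x.1 x.2 y.1 y.2 := by
  have hL : ∀ pm : (Fin 3 →₀ ℕ) × (Fin 3 →₀ ℕ), (∑ r ∈ Finset.HasAntidiagonal.antidiagonal pm.2, ∑ qq ∈ Finset.HasAntidiagonal.antidiagonal pm.1,
      F qq.1 r.1 qq.2 r.2) = ∑ z ∈ Finset.HasAntidiagonal.antidiagonal pm.2 ×ˢ Finset.HasAntidiagonal.antidiagonal pm.1,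
      F z.2.1 z.1.1 z.2.2 z.1.2 := fun pm => (Finset.sum_product' ..).symm
  have hR : ∀ rs : (Fin 3 →₀ ℕ) × (Fin 3 →₀ ℕ), (∑ x ∈ Finset.HasAntidiagonal.antidiagonal rs.1, ∑ y ∈ Finset.HasAntidiagonal.antidiagonal rs.2,
      F x.1 x.2 y.1 y.2) = ∑ z ∈ Finset.HasAntidiagonal.antidiagonal rs.1 ×ˢ Finset.HasAntidiagonal.antidiagonal rs.2,
      F z.1.1 z.1.2 z.2.1 z.2.2 := fun rs => (Finset.sum_product' ..).symm
  rw [Finset.sum_congr rfl fun pm _ => hL pm, Finset.sum_congr rfl fun rs _ => hR rs]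
  refine Eq.trans (Finset.sum_sigma' _ _ _) (Eq.trans ?_ (Finset.sum_sigma' _ _ _).symm)
  refine Finset.sum_nbij'
    (i := fun x => ⟨(x.2.2.1 + x.2.1.1, x.2.2.2 + x.2.1.2), ((x.2.2.1, x.2.1.1), (x.2.2.2, x.2.1.2))⟩)
    (j := fun x => ⟨(x.2.1.1 + x.2.2.1, x.2.1.2 + x.2.2.2), ((x.2.1.2, x.2.2.2), (x.2.1.1, x.2.2.1))⟩)
    ?_ ?_ ?_ ?_ ?_
  · rintro ⟨⟨p, m⟩, ⟨⟨q1, q2⟩, ⟨p1, p2⟩⟩⟩ hx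
    simp only [Finset.mem_sigma, Finset.mem_product, Finset.HasAntidiagonal.mem_antidiagonal] at hx ⊢
    obtain ⟨hn, hq, hp⟩ := hx
    refine ⟨?_, trivial, trivial⟩
    rw [add_add_add_comm, hq, hp, hn]
  · rintro ⟨⟨r, s⟩, ⟨⟨p1, q1⟩, ⟨p2, q2⟩⟩⟩ hx
    simp only [Finset.mem_sigma, Finset.mem_product, Finset.HasAntidiagonal.mem_antidiagonal] at hx ⊢
    obtain ⟨hn, hr, hs⟩ := hx
    refine ⟨?_, trivial, trivial⟩
    rw [add_add_add_comm, hr, hs, hn]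
  · rintro ⟨⟨p, m⟩, ⟨⟨q1, q2⟩, ⟨p1, p2⟩⟩⟩ hx
    simp only [Finset.mem_sigma, Finset.mem_product, Finset.HasAntidiagonal.mem_antidiagonal] at hx
    obtain ⟨hn, hq, hp⟩ := hx
    simp [Sigma.mk.inj_iff, hp, hq]
  · rintro ⟨⟨r, s⟩, ⟨⟨p1, q1⟩, ⟨p2, q2⟩⟩⟩ hx
    simp only [Finset.mem_sigma, Finset.mem_product, Finset.HasAntidiagonal.mem_antidiagonal] at hx
    obtain ⟨hn, hr, hs⟩ := hx
    simp [Sigma.mk.inj_iff, hr, hs]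
  · rintro ⟨⟨p, m⟩, ⟨⟨q1, q2⟩, ⟨p1, p2⟩⟩⟩ _
    rfl

noncomputable def geo (i : Fin 3) (v : Ltr) (p : Fin 3 →₀ ℕ) : H :=
  if p = Finsupp.single i (p i) then wrd (List.replicate (p i) v) else 0

noncomputable def Geo (i : Fin 3) (v : Ltr) : PS3 := fun p => geo i v p

lemma coeff_Geo (i : Fin 3) (v : Ltr) (q : Fin 3 →₀ ℕ) :
    MvPowerSeries.coeff q (Geo i v) = geo i v q := rfl

lemma Pelt_eq (i : Fin 3) (u : Ltr) :
    Pelt i u = MvPowerSeries.monomial (Finsupp.single i 1) (wrd [u]) := by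
  rw [Pelt, MvPowerSeries.X, show MvPowerSeries.C (wrd [u])
      = MvPowerSeries.monomial 0 (wrd [u]) from rfl,
    MvPowerSeries.monomial_mul_monomial, add_zero, one_mul]

lemma hGeo (i : Fin 3) (u : Ltr) : (1 - Pelt i u) * Geo i u = 1 := by
  refine MvPowerSeries.ext fun p => ?_
  rw [sub_mul, one_mul, map_sub, Pelt_eq, MvPowerSeries.coeff_monomial_mul]
  by_cases hps : p = Finsupp.single i (p i)
  · by_cases hp0 : p = 0
    · subst hp0
      have hle : ¬ Finsupp.single i 1 ≤ (0 : Fin 3 →₀ ℕ) := by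
        simp [Finsupp.single_le_iff]
      rw [if_neg hle, coeff_Geo, geo, if_pos (by simp), MvPowerSeries.coeff_one, if_pos rfl]
      simp [wrd_nil]
    · have hpi : p i ≠ 0 := fun h => hp0 (by rw [hps, h, Finsupp.single_zero])
      obtain ⟨m, hm⟩ := Nat.exists_eq_succ_of_ne_zero hpi
      have hle : Finsupp.single i 1 ≤ p :=
        Finsupp.single_le_iff.mpr (Nat.one_le_iff_ne_zero.mpr hpi)
      have hsub : p - Finsupp.single i 1 = Finsupp.single i m := by
        rw [hps, ← Finsupp.single_tsub, hm]
        simp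
      rw [if_pos hle, coeff_Geo, coeff_Geo, hsub, geo, geo, if_pos hps,
        if_pos (by simp [Finsupp.single_eq_same]), Finsupp.single_eq_same,
        MvPowerSeries.coeff_one, if_neg hp0, hm, List.replicate_succ,
        show (u :: List.replicate m u) = [u] ++ List.replicate m u from rfl, ← wrd_mul]
      simp
  · have h2 : (if Finsupp.single i 1 ≤ p then
        wrd [u] * MvPowerSeries.coeff (p - Finsupp.single i 1) (Geo i u) else 0) = 0 := by
      split_ifs with hle
      · have : geo i u (p - Finsupp.single i 1) = 0 := by
          rw [geo, if_neg]
          intro hq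
          apply hps
          have hpe : p - Finsupp.single i 1 + Finsupp.single i 1 = p := tsub_add_cancel_of_le hle
          refine Finsupp.ext fun j => ?_
          rcases eq_or_ne j i with rfl | hji
          · rw [Finsupp.single_eq_same]
          · rw [Finsupp.single_eq_of_ne hji]
            have h2 := DFunLike.congr_fun hpe j
            have hzq := DFunLike.congr_fun hq j
            rw [Finsupp.single_eq_of_ne hji] at hzq
            rw [← h2, Finsupp.add_apply, hzq, Finsupp.single_eq_of_ne hji]
            rfl
        rw [coeff_Geo, this, mul_zero]
      · rfl
    have hp0 : p ≠ 0 := fun h => hps (by rw [h]; simp)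
    rw [h2, coeff_Geo, geo, if_neg hps, MvPowerSeries.coeff_one, if_neg hp0, sub_zero]

lemma geoSplit (i : Fin 3) (v c : Ltr) (p : Fin 3 →₀ ℕ) (f g : H) :
    shuf (geo i v p) (f * wrd [c] * g) =
    ∑ q ∈ Finset.HasAntidiagonal.antidiagonal p, shuf (geo i v q.1) f * wrd [c] * shuf (geo i v q.2) g := by
  by_cases hps : p = Finsupp.single i (p i)
  · obtain ⟨K, hK⟩ : ∃ K, p = Finsupp.single i K := ⟨p i, hps⟩
    have hgeo : ∀ k : ℕ, geo i v (Finsupp.single i k) = wrd (List.replicate k v) := by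
      intro k
      rw [geo, if_pos (by rw [Finsupp.single_eq_same]), Finsupp.single_eq_same]
    rw [hK, hgeo, keyH v c K f g, Finsupp.antidiagonal_single, Finset.sum_map]
    simp only [Function.Embedding.coe_prodMap, Function.Embedding.coeFn_mk, Prod.map_fst,
      Prod.map_snd, hgeo]
    rw [Finset.Nat.sum_antidiagonal_eq_sum_range_succ_mk]
  · rw [show geo i v p = 0 from if_neg hps, shuf_zero_left]
    symm
    refine Finset.sum_eq_zero fun q hq => ?_
    rw [Finset.HasAntidiagonal.mem_antidiagonal] at hq
    by_cases h1 : q.1 = Finsupp.single i (q.1 i)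
    · have h2 : geo i v q.2 = 0 := by
        rw [geo, if_neg]
        intro h2
        apply hps
        have hadd : (q.1 + q.2) i = q.1 i + q.2 i := Finsupp.add_apply q.1 q.2 i
        rw [← hq, hadd, Finsupp.single_add, ← h1, ← h2]
      rw [h2, shuf_zero_left, mul_zero]
    · rw [show geo i v q.1 = 0 from if_neg h1, shuf_zero_left, zero_mul, zero_mul]

lemma coeff_mul_C_mul (A B : PS3) (w : H) (q : Fin 3 →₀ ℕ) :
    MvPowerSeries.coeff q (A * MvPowerSeries.C w * B)
    = ∑ r ∈ Finset.HasAntidiagonal.antidiagonal q,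
        MvPowerSeries.coeff r.1 A * w * MvPowerSeries.coeff r.2 B := by
  rw [MvPowerSeries.coeff_mul]
  exact Finset.sum_congr rfl fun r _ => by rw [MvPowerSeries.coeff_mul_C]

lemma key3 (i : Fin 3) (v c : Ltr) (A B : PS3) :
    shuf3 (Geo i v) (A * MvPowerSeries.C (wrd [c]) * B)
    = shuf3 (Geo i v) A * MvPowerSeries.C (wrd [c]) * shuf3 (Geo i v) B := by
  refine MvPowerSeries.ext fun n => ?_
  have e1 : MvPowerSeries.coeff n (shuf3 (Geo i v) (A * MvPowerSeries.C (wrd [c]) * B))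
      = ∑ pm ∈ Finset.HasAntidiagonal.antidiagonal n, ∑ r ∈ Finset.HasAntidiagonal.antidiagonal pm.2, ∑ qq ∈ Finset.HasAntidiagonal.antidiagonal pm.1,
          shuf (geo i v qq.1) (MvPowerSeries.coeff r.1 A) * wrd [c] *
            shuf (geo i v qq.2) (MvPowerSeries.coeff r.2 B) := by
    refine Finset.sum_congr rfl fun pm _ => ?_
    rw [coeff_Geo, coeff_mul_C_mul, shuf_sum_right]
    exact Finset.sum_congr rfl fun r _ =>
      geoSplit i v c pm.1 (MvPowerSeries.coeff r.1 A) (MvPowerSeries.coeff r.2 B)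
  have e2 : MvPowerSeries.coeff n
        (shuf3 (Geo i v) A * MvPowerSeries.C (wrd [c]) * shuf3 (Geo i v) B)
      = ∑ rs ∈ Finset.HasAntidiagonal.antidiagonal n, ∑ x ∈ Finset.HasAntidiagonal.antidiagonal rs.1, ∑ y ∈ Finset.HasAntidiagonal.antidiagonal rs.2,
          shuf (geo i v x.1) (MvPowerSeries.coeff x.2 A) * wrd [c] *
            shuf (geo i v y.1) (MvPowerSeries.coeff y.2 B) := by
    rw [coeff_mul_C_mul]
    refine Finset.sum_congr rfl fun rs _ => ?_
    have hA : MvPowerSeries.coeff rs.1 (shuf3 (Geo i v) A)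
        = ∑ x ∈ Finset.HasAntidiagonal.antidiagonal rs.1, shuf (geo i v x.1) (MvPowerSeries.coeff x.2 A) := rfl
    have hB : MvPowerSeries.coeff rs.2 (shuf3 (Geo i v) B)
        = ∑ y ∈ Finset.HasAntidiagonal.antidiagonal rs.2, shuf (geo i v y.1) (MvPowerSeries.coeff y.2 B) := rfl
    rw [hA, hB, Finset.sum_mul, Finset.sum_mul]
    exact Finset.sum_congr rfl fun x _ => by rw [Finset.mul_sum]
  rw [e1, e2]
  exact sum4 n fun a b c' d =>
    shuf (geo i v a) (MvPowerSeries.coeff b A) * wrd [c] *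
      shuf (geo i v c') (MvPowerSeries.coeff d B)

lemma chain_cons (w : PS3) (a : Ltr) (W : PS3) (t : List (Ltr × PS3)) :
    chain w ((a, W) :: t) = w * MvPowerSeries.C (wrd [a]) * chain W t := by
  rw [chain, chain, List.map_cons, List.prod_cons]
  simp [mul_assoc]

/-- For `P = S·v`, one has
`(1-P)⁻¹ ⧢ (w₀u₁w₁⋯u_mw_m) = ((1-P)⁻¹⧢w₀)u₁((1-P)⁻¹⧢w₁)⋯u_m((1-P)⁻¹⧢w_m)`. -/
theorem stmt1 (i : Fin 3) (u : Ltr) (G : PS3)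
    (h : (1 - Pelt i u) * G = 1) (h' : G * (1 - Pelt i u) = 1)
    (w₀ : PS3) (l : List (Ltr × PS3)) :
    shuf3 G (chain w₀ l) = chain (shuf3 G w₀) (l.map fun p => (p.1, shuf3 G p.2)) := by
  have hG : G = Geo i u := by
    calc G = G * ((1 - Pelt i u) * Geo i u) := by rw [hGeo, mul_one]
    _ = G * (1 - Pelt i u) * Geo i u := (mul_assoc _ _ _).symm
    _ = Geo i u := by rw [h', one_mul]
  subst hG
  induction l generalizing w₀ with
  | nil => simp [chain]
  | cons hd tl ih =>
    obtain ⟨a, W⟩ := hd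
    rw [chain_cons, key3 i u a w₀ (chain W tl), ih W, List.map_cons, chain_cons]
end

section
/- The symmetric harmonic product satisfies the shift formula: for all w₁, w₂ ∈ 𝔥' one has x w₁ ⊛̃ w₂ = w₁ ⊛̃ x w₂ = x(w₁ ⊛̃ w₂). -/
open scoped BigOperators

/-- `e₀ = x`, `e₁ = -y`. -/
noncomputable def eH (a : Ltr) : H := if a = 0 then Xh else -Yh

/-- The product `e_{a₁}⋯e_{a_m} ∈ 𝔥` for an `e`-word. -/
noncomputable def ew (l : List Ltr) : H := ((-1 : ℚ) ^ (l.count 1)) • wrd l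

/-- The symmetric harmonic product on basis `e`-words:
`e_a ⊛̃ e_{b₁}⋯e_{bₙ} = e_{b₁}⋯e_{bₙ} ⊛̃ e_a = e_{ab₁}⋯e_{abₙ}` and
`e_a w₁ ⊛̃ e_b w₂ = e_{ab}(w₁ ⊛̃ e_b w₂) + e_{ab}(e_a w₁ ⊛̃ w₂) - e_{ab}e₀(w₁ ⊛̃ w₂)`. -/
noncomputable def mstE : List Ltr → List Ltr → H
  | [a], b :: bs => ew ((b :: bs).map (fun c => a * c))
  | a :: a' :: as, [b] => ew ((a :: a' :: as).map (fun c => c * b))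
  | a :: a' :: as, b :: b' :: bs =>
      eH (a * b) * mstE (a' :: as) (b :: b' :: bs)
      + eH (a * b) * mstE (a :: a' :: as) (b' :: bs)
      - eH (a * b) * Xh * mstE (a' :: as) (b' :: bs)
  | _, _ => 0
termination_by l₁ l₂ => l₁.length + l₂.length

/-- The symmetric harmonic product `⊛̃ : 𝔥' ⊗ 𝔥' → 𝔥'`, extended bilinearly
(using that the word `u₁⋯u_m` equals `(-1)^{#{i : uᵢ = y}} e_{u₁}⋯e_{u_m}`). -/
noncomputable def mst (f g : H) : H :=
  f.coeff.sum fun u cu => g.coeff.sum fun v cv =>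
    (cu * cv * (-1 : ℚ) ^ ((FreeMonoid.toList u).count 1)
      * (-1 : ℚ) ^ ((FreeMonoid.toList v).count 1)) •
      mstE (FreeMonoid.toList u) (FreeMonoid.toList v)


lemma wrd_cons (a : Ltr) (l : List Ltr) : wrd (a :: l) = wrd [a] * wrd l := by
  unfold wrd; rw [← map_mul]; rfl

lemma ew_cons_zero (l : List Ltr) : ew ((0 : Ltr) :: l) = Xh * ew l := by
  unfold ew
  rw [List.count_cons_of_ne (by decide), wrd_cons, mul_smul_comm]; rfl

lemma eH_zero : eH 0 = Xh := by simp [eH]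

lemma mstE_zero_left (l₁ l₂ : List Ltr) (h₁ : l₁ ≠ []) (h₂ : l₂ ≠ []) :
    mstE ((0 : Ltr) :: l₁) l₂ = Xh * mstE l₁ l₂ := by
  induction l₂ generalizing l₁ with
  | nil => exact absurd rfl h₂
  | cons b bs ih =>
    obtain ⟨a, as, rfl⟩ := List.exists_cons_of_ne_nil h₁
    cases bs with
    | nil =>
      cases as with
      | nil => rw [mstE, mstE]; simp [zero_mul, ew_cons_zero, mul_comm]
      | cons a' as' => rw [mstE, mstE]; simp [zero_mul, ew_cons_zero]
    | cons b' bs' =>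
      rw [mstE, zero_mul, eH_zero, ih (a :: as) (by simp) (by simp)]
      noncomm_ring

lemma mstE_zero_right (l₁ l₂ : List Ltr) (h₁ : l₁ ≠ []) (h₂ : l₂ ≠ []) :
    mstE l₁ ((0 : Ltr) :: l₂) = Xh * mstE l₁ l₂ := by
  induction l₁ generalizing l₂ with
  | nil => exact absurd rfl h₁
  | cons a as ih =>
    obtain ⟨b, bs, rfl⟩ := List.exists_cons_of_ne_nil h₂
    cases as with
    | nil => rw [mstE, mstE]; simp [mul_zero, ew_cons_zero]
    | cons a' as' =>
      rw [mstE, mul_zero, eH_zero, ih (b :: bs) (by simp) (by simp)]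
      noncomm_ring

lemma sig_inj : Function.Injective (fun u : FreeMonoid Ltr => FreeMonoid.ofList [(0:Ltr)] * u) := by
  intro a b h
  apply FreeMonoid.toList.injective
  simpa [FreeMonoid.toList_mul] using congrArg FreeMonoid.toList h

lemma Xh_mul (f : H) :
    (Xh * f).coeff = Finsupp.mapDomain (fun u => FreeMonoid.ofList [(0:Ltr)] * u) f.coeff := by
  rw [MonoidAlgebra.mul_def]
  show (((Finsupp.single (FreeMonoid.ofList [(0:Ltr)]) (1:ℚ)).sum _ : H)).coeff = _
  rw [Finsupp.sum_single_index (by simp), Finsupp.mapDomain, MonoidAlgebra.coeff_finsuppSum]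
  apply Finsupp.sum_congr
  intro v _
  rw [one_mul, MonoidAlgebra.coeff_single]

/-- For `w₁, w₂ ∈ 𝔥' = y𝔥 ⊕ x𝔥` (no constant term),
`xw₁ ⊛̃ w₂ = w₁ ⊛̃ xw₂ = x(w₁ ⊛̃ w₂)`. -/
theorem stmt2 (w₁ w₂ : H) (h₁ : w₁.coeff (1 : FreeMonoid Ltr) = 0)
    (h₂ : w₂.coeff (1 : FreeMonoid Ltr) = 0) :
    mst (Xh * w₁) w₂ = Xh * mst w₁ w₂ ∧ mst w₁ (Xh * w₂) = Xh * mst w₁ w₂ := by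
  have hne : ∀ (w : H), w.coeff (1 : FreeMonoid Ltr) = 0 →
      ∀ u ∈ w.coeff.support, FreeMonoid.toList u ≠ [] := by
    intro w hw u hu hnil
    apply Finsupp.mem_support_iff.mp hu
    have : u = 1 := FreeMonoid.toList.injective hnil
    rw [this]; exact hw
  constructor
  · rw [mst.eq_1 (Xh * w₁), Xh_mul, Finsupp.sum_mapDomain_index_inj sig_inj, mst, Finsupp.mul_sum]
    apply Finsupp.sum_congr
    intro u hu
    rw [Finsupp.mul_sum]
    apply Finsupp.sum_congr
    intro v hv
    have ht : FreeMonoid.toList (FreeMonoid.ofList [(0:Ltr)] * u)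
        = (0 : Ltr) :: FreeMonoid.toList u := rfl
    rw [ht, List.count_cons_of_ne (by decide),
      mstE_zero_left _ _ (hne w₁ h₁ u hu) (hne w₂ h₂ v hv), mul_smul_comm]
  · rw [mst, mst, Finsupp.mul_sum]
    apply Finsupp.sum_congr
    intro u hu
    rw [Xh_mul, Finsupp.sum_mapDomain_index_inj sig_inj, Finsupp.mul_sum]
    apply Finsupp.sum_congr
    intro v hv
    have ht : FreeMonoid.toList (FreeMonoid.ofList [(0:Ltr)] * v)
        = (0 : Ltr) :: FreeMonoid.toList v := rfl
    rw [ht, List.count_cons_of_ne (by decide),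
      mstE_zero_right _ _ (hne w₁ h₁ u hu) (hne w₂ h₂ v hv), mul_smul_comm]
end

section
/- The symmetric harmonic product is compatible with word reversal: for all w₁, w₂ ∈ 𝔥', the reversal of w₁ ⊛̃ w₂ equals (reversal of w₁) ⊛̃ (reversal of w₂). -/
open scoped BigOperators

/-- Word reversal, extended linearly. -/
noncomputable def revH (f : H) : H :=
  MonoidAlgebra.ofCoeff (Finsupp.mapDomain (fun l => FreeMonoid.ofList (FreeMonoid.toList l).reverse) f.coeff)

-- basic lemmas
lemma wrd_append (l₁ l₂ : List Ltr) : wrd (l₁ ++ l₂) = wrd l₁ * wrd l₂ := by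
  unfold wrd; rw [← map_mul]; rfl

lemma ew_nil : ew ([] : List Ltr) = 1 := by
  simp [ew, wrd]; rfl

lemma ew_cons (a : Ltr) (l : List Ltr) : ew (a :: l) = eH a * ew l := by
  have h : (a :: l) = [a] ++ l := rfl
  rw [ew, h, wrd_append]
  fin_cases a <;>
  simp [eH, Xh, Yh, ew, List.count_cons, pow_succ, mul_comm, smul_smul, mul_smul_comm, smul_mul_assoc]

lemma ew_singleton (a : Ltr) : ew [a] = eH a := by rw [ew_cons, ew_nil, mul_one]

lemma ew_concat (l : List Ltr) (a : Ltr) : ew (l ++ [a]) = ew l * eH a := by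
  induction l with
  | nil => simp [ew_nil, ew_singleton]
  | cons c cs ih => rw [List.cons_append, ew_cons, ih, ew_cons, mul_assoc]

lemma mstE_single_left (a b : Ltr) (bs : List Ltr) :
    mstE [a] (b :: bs) = ew ((b :: bs).map (fun c => a * c)) := by rw [mstE]

lemma mstE_single_right (a a' b : Ltr) (as : List Ltr) :
    mstE (a :: a' :: as) [b] = ew ((a :: a' :: as).map (fun c => c * b)) := by rw [mstE]

lemma mstE_cons_cons (a a' b b' : Ltr) (as bs : List Ltr) :
    mstE (a :: a' :: as) (b :: b' :: bs) =
      eH (a * b) * mstE (a' :: as) (b :: b' :: bs)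
      + eH (a * b) * mstE (a :: a' :: as) (b' :: bs)
      - eH (a * b) * Xh * mstE (a' :: as) (b' :: bs) := by rw [mstE]

lemma mstE_nil_left (l : List Ltr) : mstE [] l = 0 := by
  cases l with
  | nil => rw [mstE] <;> simp
  | cons b bs => rw [mstE] <;> simp

lemma mstE_nil_right (l : List Ltr) : mstE l [] = 0 := by
  match l with
  | [] => rw [mstE] <;> simp
  | [a] => rw [mstE] <;> simp
  | a :: a' :: as => rw [mstE] <;> simp

lemma mstE_left_single (a : Ltr) {l : List Ltr} (h : l ≠ []) :
    mstE [a] l = ew (l.map (fun c => a * c)) := by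
  match l with
  | [] => exact absurd rfl h
  | b :: bs => exact mstE_single_left a b bs

lemma mstE_right_single (b : Ltr) {l : List Ltr} (h : l ≠ []) :
    mstE l [b] = ew (l.map (fun c => c * b)) := by
  match l with
  | [] => exact absurd rfl h
  | [a] => rw [mstE_single_left]; simp [mul_comm]
  | a :: a' :: as => exact mstE_single_right a a' b as

lemma mstE_comm : ∀ (l₁ l₂ : List Ltr), mstE l₁ l₂ = mstE l₂ l₁
  | [], l₂ => by rw [mstE_nil_left, mstE_nil_right]
  | a :: as, [] => by rw [mstE_nil_left, mstE_nil_right]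
  | [a], [b] => by
      rw [mstE_single_left, mstE_single_left]; simp [mul_comm]
  | [a], b :: b' :: bs => by
      rw [mstE_single_left, mstE_single_right]
      have : (fun c : Ltr => a * c) = (fun c : Ltr => c * a) := funext fun c => mul_comm a c
      rw [this]
  | a :: a' :: as, [b] => by
      rw [mstE_single_left, mstE_single_right]
      have : (fun c : Ltr => b * c) = (fun c : Ltr => c * b) := funext fun c => mul_comm b c
      rw [this]
  | a :: a' :: as, b :: b' :: bs => by
      rw [mstE_cons_cons, mstE_cons_cons,
        mstE_comm (a' :: as) (b :: b' :: bs),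
        mstE_comm (a :: a' :: as) (b' :: bs),
        mstE_comm (a' :: as) (b' :: bs), mul_comm a b]
      abel
termination_by l₁ l₂ => l₁.length + l₂.length

lemma keyA1 (a' a b : Ltr) : ∀ (bs : List Ltr) (b' : Ltr),
    mstE [a', a] ((b' :: bs) ++ [b]) =
      mstE [a'] ((b' :: bs) ++ [b]) * eH (a * b) + mstE [a', a] (b' :: bs) * eH (a * b)
      - mstE [a'] (b' :: bs) * (Xh * eH (a * b)) := by
  intro bs
  induction bs with
  | nil =>
      intro b'
      simp only [List.cons_append, List.nil_append, mstE_cons_cons, mstE_single_left,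
        mstE_single_right, List.map_cons, List.map_nil, ew_cons, ew_singleton, ew_nil]
      noncomm_ring
  | cons b'' bs ih =>
      intro b'
      have ih' := ih b''
      simp only [List.cons_append] at ih' ⊢
      rw [mstE_cons_cons, mstE_cons_cons, ih']
      simp only [mstE_single_left, List.map_cons, List.map_append, List.map_nil, ew_concat,
        ew_cons]
      noncomm_ring

lemma keyA : ∀ (l₁ l₂ : List Ltr) (a b : Ltr), l₁ ≠ [] → l₂ ≠ [] →
    mstE (l₁ ++ [a]) (l₂ ++ [b]) =
      mstE l₁ (l₂ ++ [b]) * eH (a * b) + mstE (l₁ ++ [a]) l₂ * eH (a * b)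
      - mstE l₁ l₂ * (Xh * eH (a * b))
  | [a'], b' :: bs, a, b, _, _ => keyA1 a' a b bs b'
  | a' :: a'' :: as, [b'], a, b, _, _ => by
      have h₁ : (a' :: a'' :: as : List Ltr) ≠ [] := by simp
      have key := keyA1 b' b a (a'' :: as) a'
      calc mstE ((a' :: a'' :: as) ++ [a]) ([b'] ++ [b])
          = mstE ([b'] ++ [b]) ((a' :: a'' :: as) ++ [a]) := mstE_comm _ _
        _ = mstE [b'] ((a' :: a'' :: as) ++ [a]) * eH (b * a)
            + mstE [b', b] (a' :: a'' :: as) * eH (b * a)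
            - mstE [b'] (a' :: a'' :: as) * (Xh * eH (b * a)) := key
        _ = _ := by
            rw [mstE_comm [b'] ((a' :: a'' :: as) ++ [a]),
              mstE_comm [b', b] (a' :: a'' :: as),
              mstE_comm [b'] (a' :: a'' :: as), mul_comm b a]
            simp only [List.cons_append, List.nil_append]
            abel
  | a' :: a'' :: as, b' :: b'' :: bs, a, b, _, _ => by
      have i₁ := keyA (a'' :: as) (b' :: b'' :: bs) a b (by simp) (by simp)
      have i₂ := keyA (a' :: a'' :: as) (b'' :: bs) a b (by simp) (by simp)
      have i₃ := keyA (a'' :: as) (b'' :: bs) a b (by simp) (by simp)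
      simp only [List.cons_append] at i₁ i₂ i₃ ⊢
      rw [mstE_cons_cons, i₁, i₂, i₃, mstE_cons_cons a' a'' b' b'' (as ++ [a]) bs,
        mstE_cons_cons a' a'' b' b'' as (bs ++ [b]), mstE_cons_cons a' a'' b' b'' as bs]
      noncomm_ring
termination_by l₁ l₂ => l₁.length + l₂.length

lemma revH_add (f g : H) : revH (f + g) = revH f + revH g := by
  unfold revH; rw [MonoidAlgebra.coeff_add, Finsupp.mapDomain_add]; rfl
lemma revH_smul (c : ℚ) (f : H) : revH (c • f) = c • revH f := by
  unfold revH; rw [MonoidAlgebra.coeff_smul, Finsupp.mapDomain_smul]; rfl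
lemma revH_sub (f g : H) : revH (f - g) = revH f - revH g := by
  have : f - g = f + (-1 : ℚ) • g := by simp [sub_eq_add_neg]
  rw [this, revH_add, revH_smul]
  simp [sub_eq_add_neg]

lemma revH_single (m : FreeMonoid Ltr) (c : ℚ) :
    revH (MonoidAlgebra.single m c) =
      MonoidAlgebra.single (FreeMonoid.ofList (FreeMonoid.toList m).reverse) c := by
  unfold revH; rw [MonoidAlgebra.coeff_single, Finsupp.mapDomain_single]; rfl

lemma revH_mul (f g : H) : revH (f * g) = revH g * revH f := by
  induction f using MonoidAlgebra.induction_linear with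
  | zero => simp [revH]
  | add f f' hf hf' => rw [add_mul, revH_add, hf, hf', revH_add, mul_add]
  | single m c =>
    induction g using MonoidAlgebra.induction_linear with
    | zero => simp [revH]
    | add g g' hg hg' => rw [mul_add, revH_add, hg, hg', revH_add, add_mul]
    | single m' c' =>
      rw [MonoidAlgebra.single_mul_single, revH_single, revH_single, revH_single,
        MonoidAlgebra.single_mul_single]
      congr 1
      · show FreeMonoid.ofList _ = FreeMonoid.ofList _ * FreeMonoid.ofList _
        rw [← FreeMonoid.ofList_append]
        congr 1
        simp
      · exact mul_comm c c'

lemma revH_wrd (l : List Ltr) : revH (wrd l) = wrd l.reverse := by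
  show revH (MonoidAlgebra.single (FreeMonoid.ofList l) 1) = _
  rw [revH_single]
  simp [wrd, MonoidAlgebra.of_apply]

lemma revH_ew (l : List Ltr) : revH (ew l) = ew l.reverse := by
  rw [ew, revH_smul, revH_wrd, ew, List.count_reverse]

lemma revH_eH (c : Ltr) : revH (eH c) = eH c := by
  have h1 : revH Xh = Xh := by rw [Xh, revH_wrd]; rfl
  have h2 : revH Yh = Yh := by rw [Yh, revH_wrd]; rfl
  have hneg : revH (-Yh) = -Yh := by
    have := revH_smul (-1) Yh
    simpa [h2] using this
  fin_cases c <;> simp [eH, h1, hneg]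

lemma revH_Xh : revH Xh = Xh := by rw [Xh, revH_wrd]; rfl

lemma revH_mstE : ∀ (l₁ l₂ : List Ltr), l₁ ≠ [] → l₂ ≠ [] →
    revH (mstE l₁ l₂) = mstE l₁.reverse l₂.reverse
  | [], _, h, _ => absurd rfl h
  | _, [], _, h => absurd rfl h
  | [a], b :: bs, _, _ => by
      have h2 : (b :: bs : List Ltr).reverse ≠ [] := by simp
      have e : ([a] : List Ltr).reverse = [a] := by simp
      rw [mstE_left_single a (by simp), revH_ew, e, mstE_left_single a h2, List.map_reverse]
  | a :: a' :: as, [b], _, _ => by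
      have h2 : (a :: a' :: as : List Ltr).reverse ≠ [] := by simp
      have e : ([b] : List Ltr).reverse = [b] := by simp
      rw [mstE_right_single b (l := a :: a' :: as) (by simp), revH_ew, e,
        mstE_right_single b h2, List.map_reverse]
  | a :: a' :: as, b :: b' :: bs, _, _ => by
      have i₁ := revH_mstE (a' :: as) (b :: b' :: bs) (by simp) (by simp)
      have i₂ := revH_mstE (a :: a' :: as) (b' :: bs) (by simp) (by simp)
      have i₃ := revH_mstE (a' :: as) (b' :: bs) (by simp) (by simp)
      have key := keyA (a' :: as).reverse (b' :: bs).reverse a b (by simp) (by simp)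
      have e₁ : (a :: a' :: as : List Ltr).reverse = (a' :: as).reverse ++ [a] := by simp
      have e₂ : (b :: b' :: bs : List Ltr).reverse = (b' :: bs).reverse ++ [b] := by simp
      rw [mstE_cons_cons, revH_sub, revH_add, revH_mul, revH_mul, revH_mul, revH_mul,
        revH_eH, revH_Xh, i₁, i₂, i₃, e₁, e₂, key, ← e₂]
termination_by l₁ l₂ => l₁.length + l₂.length

lemma toList_ne_nil {u : FreeMonoid Ltr} (h : u ≠ 1) : FreeMonoid.toList u ≠ [] := by
  intro hc
  apply h
  have := congrArg FreeMonoid.ofList hc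
  simpa using this

/-- For `w₁, w₂ ∈ 𝔥'`, the reversal of `w₁ ⊛̃ w₂` equals
`(reversal of w₁) ⊛̃ (reversal of w₂)`. -/
theorem stmt4 (w₁ w₂ : H) (h₁ : w₁.coeff (1 : FreeMonoid Ltr) = 0)
    (h₂ : w₂.coeff (1 : FreeMonoid Ltr) = 0) :
    revH (mst w₁ w₂) = mst (revH w₁) (revH w₂) := by
  classical
  set r : FreeMonoid Ltr → FreeMonoid Ltr :=
    fun l => FreeMonoid.ofList (FreeMonoid.toList l).reverse with hr
  -- LHS: push revH through the sums
  have hL : revH (mst w₁ w₂) =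
      w₁.coeff.sum fun u cu => w₂.coeff.sum fun v cv =>
        (cu * cv * (-1 : ℚ) ^ ((FreeMonoid.toList u).count 1)
          * (-1 : ℚ) ^ ((FreeMonoid.toList v).count 1)) •
          revH (mstE (FreeMonoid.toList u) (FreeMonoid.toList v)) := by
    have hrev : ∀ f : H, revH f = ({ toFun := revH, map_add' := revH_add, map_smul' := revH_smul } : H →ₗ[ℚ] H) f := fun f => rfl
    rw [mst, Finsupp.sum, hrev, map_sum]
    refine Finset.sum_congr rfl fun u hu => ?_
    rw [Finsupp.sum, map_sum]
    refine Finset.sum_congr rfl fun v hv => ?_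
    rw [map_smul, ← hrev]
  -- RHS: unfold the mapDomain sums
  have hcount : ∀ m : FreeMonoid Ltr,
      (FreeMonoid.toList (r m)).count 1 = (FreeMonoid.toList m).count 1 := by
    intro m; simp [hr, List.count_reverse]
  have hR : mst (revH w₁) (revH w₂) =
      w₁.coeff.sum fun u cu => w₂.coeff.sum fun v cv =>
        (cu * cv * (-1 : ℚ) ^ ((FreeMonoid.toList u).count 1)
          * (-1 : ℚ) ^ ((FreeMonoid.toList v).count 1)) •
          mstE (FreeMonoid.toList u).reverse (FreeMonoid.toList v).reverse := by
    rw [mst]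
    show (Finsupp.mapDomain r w₁.coeff).sum _ = _
    rw [Finsupp.sum_mapDomain_index (by intro b; simp) (by intro b m₁ m₂; simp [add_mul, add_smul, ← Finsupp.sum_add])]
    refine Finsupp.sum_congr fun u hu => ?_
    show (Finsupp.mapDomain r w₂.coeff).sum _ = _
    rw [Finsupp.sum_mapDomain_index (by intro b; simp) (by intro b m₁ m₂; simp [mul_add, add_mul, add_smul])]
    refine Finsupp.sum_congr fun v hv => ?_
    simp only [hcount]
    simp [hr]
  rw [hL, hR]
  refine Finsupp.sum_congr fun u hu => ?_
  refine Finsupp.sum_congr fun v hv => ?_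
  congr 1
  refine revH_mstE _ _ (toList_ne_nil ?_) (toList_ne_nil ?_)
  · intro hc; rw [hc] at hu; exact (Finsupp.mem_support_iff.mp hu) h₁
  · intro hc; rw [hc] at hv; exact (Finsupp.mem_support_iff.mp hv) h₂
end

section
/- For n ∈ ℤ and w ∈ 𝔥, the operator f_n satisfies f_n(xw) = x f_n(w) + y f_{n-1}(xw) and f_n(yw) = y f_n(w) - y f_{n-1}(xw). -/
open scoped BigOperators

/-- `dn n w = yⁿ ⋄ w` where `⋄` is the bilinear map with `1⋄w = w⋄1 = w`,
`yw₁ ⋄ yw₂ = y(yw₁ ⋄ w₂) - y(w₁ ⋄ xw₂)` and `yw₁ ⋄ xw₂ = x(yw₁ ⋄ w₂) + y(w₁ ⋄ xw₂)`. -/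
noncomputable def dn : ℕ → List Ltr → H
  | 0, u => wrd u
  | n + 1, [] => wrd (List.replicate (n + 1) 1)
  | n + 1, a :: u =>
      if a = 0 then Xh * dn (n + 1) u + Yh * dn n (a :: u)
      else Yh * dn (n + 1) u - Yh * dn n ((0 : Ltr) :: u)
termination_by n u => (n, u.length)

/-- `dia n f = yⁿ ⋄ f`, extended linearly. -/
noncomputable def dia (n : ℕ) (f : H) : H := f.coeff.sum fun u c => c • dn n u.toList

/-- `f_n : 𝔥 → 𝔥` for `n ∈ ℤ`: `f_n = 0` for `n < 0`, `f₀ = id`, and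
`f_n(w) = yⁿ ⋄ w - (y^{n-1} ⋄ w)y` for `n ≥ 1`. -/
noncomputable def fZ (n : ℤ) (f : H) : H :=
  if n < 0 then 0 else if n = 0 then f else dia n.toNat f - dia (n.toNat - 1) f * Yh

lemma dia_zero (f : H) : dia 0 f = f := by
  simp only [dia, dn, wrd, MonoidAlgebra.of_apply, FreeMonoid.ofList_toList]
  simp [MonoidAlgebra.smul_single', MonoidAlgebra.sum_coeff_single]

lemma dia_add (n : ℕ) (f g : H) : dia n (f + g) = dia n f + dia n g := by
  unfold dia; rw [MonoidAlgebra.coeff_add]; exact Finsupp.sum_add_index' (fun _ => zero_smul ℚ _) (fun _ b c => add_smul b c _)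

lemma dia_zero_fun (n : ℕ) : dia n (0 : H) = 0 := by simp [dia]

lemma dia_single (n : ℕ) (a : FreeMonoid Ltr) (c : ℚ) :
    dia n (MonoidAlgebra.single a c) = c • dn n a.toList := by
  simp [dia, MonoidAlgebra.coeff_single, Finsupp.sum_single_index]

lemma Xh_mul_single (a : FreeMonoid Ltr) (c : ℚ) :
    Xh * MonoidAlgebra.single a c
      = MonoidAlgebra.single (FreeMonoid.ofList ((0:Ltr) :: a.toList)) c := by
  have hx : Xh = MonoidAlgebra.single (FreeMonoid.ofList [(0:Ltr)]) (1:ℚ) := by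
    simp [Xh, wrd, MonoidAlgebra.of_apply]
  rw [hx, MonoidAlgebra.single_mul_single, one_mul]
  congr 1

lemma Yh_mul_single (a : FreeMonoid Ltr) (c : ℚ) :
    Yh * MonoidAlgebra.single a c
      = MonoidAlgebra.single (FreeMonoid.ofList ((1:Ltr) :: a.toList)) c := by
  have hy : Yh = MonoidAlgebra.single (FreeMonoid.ofList [(1:Ltr)]) (1:ℚ) := by
    simp [Yh, wrd, MonoidAlgebra.of_apply]
  rw [hy, MonoidAlgebra.single_mul_single, one_mul]
  congr 1

lemma dia_key (n : ℕ) (w : H) :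
    dia (n+1) (Xh * w) = Xh * dia (n+1) w + Yh * dia n (Xh * w) ∧
    dia (n+1) (Yh * w) = Yh * dia (n+1) w - Yh * dia n (Xh * w) := by
  induction w using MonoidAlgebra.induction_linear with
  | zero => simp [dia_zero_fun]
  | add f g hf hg =>
      constructor
      · simp only [mul_add, dia_add]
        rw [hf.1, hg.1]; abel
      · simp only [mul_add, dia_add]
        rw [hf.2, hg.2]; abel
  | single a c =>
      rw [Xh_mul_single, Yh_mul_single, dia_single, dia_single, dia_single, dia_single]
      rw [show (FreeMonoid.ofList ((0:Ltr) :: a.toList)).toList = (0:Ltr) :: a.toList from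
        FreeMonoid.toList_ofList _,
        show (FreeMonoid.ofList ((1:Ltr) :: a.toList)).toList = (1:Ltr) :: a.toList from
        FreeMonoid.toList_ofList _]
      constructor
      · rw [show dn (n+1) ((0:Ltr) :: a.toList)
            = Xh * dn (n+1) a.toList + Yh * dn n ((0:Ltr) :: a.toList) from by rw [dn]; simp]
        rw [smul_add, mul_smul_comm, mul_smul_comm]
      · rw [show dn (n+1) ((1:Ltr) :: a.toList)
            = Yh * dn (n+1) a.toList - Yh * dn n ((0:Ltr) :: a.toList) from by rw [dn]; simp]
        rw [smul_sub, mul_smul_comm, mul_smul_comm]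

lemma fZ_neg {n : ℤ} (h : n < 0) (f : H) : fZ n f = 0 := by simp [fZ, h]

lemma fZ_zero (f : H) : fZ 0 f = f := by simp [fZ]

lemma fZ_succ (m : ℕ) (f : H) : fZ ((m:ℤ)+1) f = dia (m+1) f - dia m f * Yh := by
  have h1 : ¬ ((m:ℤ)+1 < 0) := by omega
  have h2 : ¬ ((m:ℤ)+1 = 0) := by omega
  rw [fZ, if_neg h1, if_neg h2, show ((m:ℤ)+1).toNat = m+1 from by omega, Nat.add_sub_cancel]

/-- For `n ∈ ℤ` and `w ∈ 𝔥`: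
`f_n(xw) = x f_n(w) + y f_{n-1}(xw)` and `f_n(yw) = y f_n(w) - y f_{n-1}(xw)`. -/
theorem stmt7 (n : ℤ) (w : H) :
    fZ n (Xh * w) = Xh * fZ n w + Yh * fZ (n - 1) (Xh * w) ∧
    fZ n (Yh * w) = Yh * fZ n w - Yh * fZ (n - 1) (Xh * w) := by
  rcases lt_trichotomy n 0 with hneg | rfl | hpos
  · rw [fZ_neg hneg, fZ_neg hneg, fZ_neg hneg, fZ_neg (by omega : n - 1 < 0)]
    simp
  · rw [fZ_zero, fZ_zero, fZ_zero, show (0:ℤ) - 1 = -1 from rfl,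
      fZ_neg (by omega : (-1:ℤ) < 0)]
    simp
  · obtain ⟨m, rfl⟩ : ∃ m : ℕ, n = (m:ℤ) + 1 := ⟨(n-1).toNat, by omega⟩
    rw [show (m:ℤ) + 1 - 1 = (m:ℤ) from by ring]
    cases m with
    | zero =>
        have e : ∀ f : H, fZ (((0:ℕ):ℤ) + 1) f = dia 1 f - dia 0 f * Yh := fZ_succ 0
        rw [show (((0:ℕ):ℤ)) = (0:ℤ) from rfl] at e
        push_cast
        norm_num at e
        rw [e, e, e, fZ_zero]
        have h := dia_key 0 w
        constructor
        · rw [h.1]; simp only [dia_zero]; noncomm_ring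
        · rw [h.2]; simp only [dia_zero]; noncomm_ring
    | succ k =>
        have e : ∀ f : H, fZ ((k:ℤ)+1+1) f = dia (k+1+1) f - dia (k+1) f * Yh := by
          intro f
          have h := fZ_succ (k+1) f
          push_cast at h
          exact h
        have e1 : ∀ f : H, fZ (((k+1:ℕ)):ℤ) f = dia (k+1) f - dia k f * Yh := by
          intro f
          have h := fZ_succ k f
          push_cast
          exact h
        push_cast
        rw [e, e, e]
        rw [show ((k:ℤ)+1) = (((k+1:ℕ)):ℤ) from by push_cast; ring, e1]
        have h1 := dia_key (k+1) w
        have h2 := dia_key k w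
        constructor
        · rw [h1.1, h2.1]; noncomm_ring
        · rw [h1.2, h2.2]; noncomm_ring
end
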